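/- arXiv:0810.5516 — 3 statements merged into one kernel-verified Lean document; each statement's English description precedes it below -/
import Mathlib

section
/- Let Σ be a finite non-empty alphabet, X ⊆ Σ* a regular language, and R ⊆ Σ* × Σ* a rational relation. Then both ⟨R⟩X := { u ∈ Σ* | ∃ v ∈ X, (u,v) ∈ R } and ⟨R⁻¹⟩X := { u ∈ Σ* | ∃ v ∈ X, (v,u) ∈ R } are regular languages over Σ. -/
open Set

section Aux

variable {β γ τ : Type} (D : DFA γ τ) (g : γ → Option β)

/-- ε-NFA over `β` simulating runs of `D` projected through `g`. -/
def projENFA : εNFA β τ where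
  step s b := {t | ∃ c : γ, g c = b ∧ t = D.step s c}
  start := {D.start}
  accept := D.accept

/-- States reachable in `D` from some state in `S` by a word whose `g`-projection is `x`. -/
def reachSet (S : Set τ) (x : List β) : Set τ :=
  {t | ∃ s ∈ S, ∃ z : List γ, z.filterMap g = x ∧ D.evalFrom s z = t}

lemma reachSet_mono {S S' : Set τ} (h : S ⊆ S') (x : List β) :
    reachSet D g S x ⊆ reachSet D g S' x := by
  rintro t ⟨s, hs, z, hz, rfl⟩
  exact ⟨s, h hs, z, hz, rfl⟩

lemma mem_reachSet_nil_self {S : Set τ} {s : τ} (hs : s ∈ S) : s ∈ reachSet D g S [] :=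
  ⟨s, hs, [], rfl, rfl⟩

lemma εClosure_eq_reachSet (S : Set τ) :
    (projENFA D g).εClosure S = reachSet D g S [] := by
  apply Set.eq_of_subset_of_subset
  · intro t ht
    induction ht with
    | base s hs => exact mem_reachSet_nil_self D g hs
    | step s t ht hs ih =>
      obtain ⟨c, hc, rfl⟩ := ht
      obtain ⟨s₀, hs₀, z, hz, rfl⟩ := ih
      refine ⟨s₀, hs₀, z ++ [c], ?_, ?_⟩
      · simp [List.filterMap_append, hz, hc]
      · simp [DFA.evalFrom_append_singleton]
  · rintro t ⟨s, hs, z, hz, rfl⟩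
    induction z using List.reverseRecOn with
    | nil => exact εNFA.εClosure.base s hs
    | append_singleton z c ih =>
      rw [List.filterMap_append] at hz
      rcases List.append_eq_nil_iff.mp hz with ⟨hz1, hz2⟩
      have hc : g c = none := by
        cases h' : g c <;> simp [List.filterMap_cons, h'] at hz2 ⊢
      rw [DFA.evalFrom_append_singleton]
      exact εNFA.εClosure.step _ _ ⟨c, hc, rfl⟩ (ih hz1)

/-- Decomposition of a word whose projection ends in a letter. -/
lemma filterMap_eq_append_singleton {z : List γ} {x : List β} {b : β}
    (h : z.filterMap g = x ++ [b]) :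
    ∃ z₁ c z₂, z = z₁ ++ c :: z₂ ∧ z₁.filterMap g = x ∧ g c = some b ∧
      z₂.filterMap g = [] := by
  induction z generalizing x with
  | nil => simp at h
  | cons c z ih =>
    rw [List.filterMap_cons] at h
    cases hc : g c with
    | none =>
      rw [hc] at h
      obtain ⟨z₁, c', z₂, rfl, h₁, h₂, h₃⟩ := ih h
      exact ⟨c :: z₁, c', z₂, rfl, by simp [List.filterMap_cons, hc, h₁], h₂, h₃⟩
    | some a =>
      rw [hc] at h
      cases x with
      | nil =>
        simp only [List.nil_append] at h
        obtain ⟨rfl, hz⟩ : a = b ∧ z.filterMap g = [] := by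
          have := List.cons.injEq a (z.filterMap g) b [] ▸ h
          simpa using h
        exact ⟨[], c, z, rfl, rfl, hc, hz⟩
      | cons a' x' =>
        simp only [List.cons_append, List.cons.injEq] at h
        obtain ⟨rfl, h'⟩ := h
        obtain ⟨z₁, c', z₂, rfl, h₁, h₂, h₃⟩ := ih h'
        exact ⟨c :: z₁, c', z₂, rfl, by simp [List.filterMap_cons, hc, h₁], h₂, h₃⟩

lemma stepSet_reachSet (S : Set τ) (x : List β) (b : β) :
    (projENFA D g).stepSet (reachSet D g S x) b = reachSet D g S (x ++ [b]) := by
  apply Set.eq_of_subset_of_subset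
  · intro t ht
    rw [εNFA.mem_stepSet_iff] at ht
    obtain ⟨u, ⟨s, hs, z₁, hz₁, rfl⟩, hu⟩ := ht
    rw [εClosure_eq_reachSet] at hu
    obtain ⟨u', ⟨c, hc, rfl⟩, z₂, hz₂, rfl⟩ := hu
    refine ⟨s, hs, z₁ ++ c :: z₂, ?_, ?_⟩
    · simp [List.filterMap_append, List.filterMap_cons, hz₁, hc, hz₂]
    · rw [DFA.evalFrom_of_append]
      rfl
  · rintro t ⟨s, hs, z, hz, rfl⟩
    obtain ⟨z₁, c, z₂, rfl, h₁, h₂, h₃⟩ := filterMap_eq_append_singleton g hz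
    rw [εNFA.mem_stepSet_iff]
    refine ⟨D.evalFrom s z₁, ⟨s, hs, z₁, h₁, rfl⟩, ?_⟩
    rw [εClosure_eq_reachSet]
    refine ⟨D.step (D.evalFrom s z₁) c, ⟨c, h₂, rfl⟩, z₂, h₃, ?_⟩
    rw [DFA.evalFrom_of_append]
    rfl

lemma projENFA_eval (x : List β) :
    (projENFA D g).eval x = reachSet D g {D.start} x := by
  induction x using List.reverseRecOn with
  | nil => rw [εNFA.eval_nil, εClosure_eq_reachSet]; rfl
  | append_singleton x b ih =>
    rw [εNFA.eval_append_singleton, ih, stepSet_reachSet]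

lemma projENFA_accepts :
    (projENFA D g).accepts = {u : List β | ∃ z ∈ D.accepts, z.filterMap g = u} := by
  ext u
  show u ∈ (projENFA D g).accepts ↔ _
  rw [εNFA.accepts]
  show (∃ S ∈ (projENFA D g).accept, S ∈ (projENFA D g).eval u) ↔ _
  constructor
  · rintro ⟨t, ht, hev⟩
    rw [projENFA_eval] at hev
    obtain ⟨s, hs, z, hz, rfl⟩ := hev
    rcases hs with rfl
    exact ⟨z, ht, hz⟩
  · rintro ⟨z, hz, rfl⟩
    refine ⟨D.eval z, hz, ?_⟩
    rw [projENFA_eval]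
    exact ⟨D.start, rfl, z, rfl, rfl⟩

/-- Image of a regular language under a `filterMap` projection is regular. -/
lemma isRegular_filterMap_image [Fintype τ] :
    Language.IsRegular {u : List β | ∃ z ∈ D.accepts, z.filterMap g = u} := by
  classical
  refine ⟨Set τ, inferInstance, (projENFA D g).toNFA.toDFA, ?_⟩
  rw [NFA.toDFA_correct, εNFA.toNFA_correct, projENFA_accepts]

variable {σ₂ : Type} (N : DFA β σ₂) (g₂ : γ → Option β)

/-- Product DFA tracking `D` on the input and `N` on the `g₂`-projection. -/
def prodProjDFA : DFA γ (τ × σ₂) where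
  step p c := (D.step p.1 c, (g₂ c).elim p.2 (N.step p.2))
  start := (D.start, N.start)
  accept := {p | p.1 ∈ D.accept ∧ p.2 ∈ N.accept}

lemma prodProjDFA_evalFrom (s : τ) (t : σ₂) (z : List γ) :
    (prodProjDFA D N g₂).evalFrom (s, t) z =
      (D.evalFrom s z, N.evalFrom t (z.filterMap g₂)) := by
  induction z generalizing s t with
  | nil => rfl
  | cons c z ih =>
    show (prodProjDFA D N g₂).evalFrom ((prodProjDFA D N g₂).step (s, t) c) z = _
    rw [List.filterMap_cons]
    cases hc : g₂ c with
    | none =>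
      simp only [prodProjDFA, hc, Option.elim]
      exact ih (D.step s c) t
    | some b =>
      simp only [prodProjDFA, hc, Option.elim]
      exact ih (D.step s c) (N.step t b)

lemma prodProjDFA_accepts :
    (prodProjDFA D N g₂).accepts =
      {z | z ∈ D.accepts ∧ z.filterMap g₂ ∈ N.accepts} := by
  ext z
  rw [DFA.mem_accepts]
  show (prodProjDFA D N g₂).evalFrom (D.start, N.start) z ∈ _ ↔ _
  rw [prodProjDFA_evalFrom]
  exact Iff.rfl

end Aux

/-- A binary relation on words over `α` is rational if it is the image, under the
two projections, of a regular language over the alphabet `Option α × Option α`. -/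
def IsRationalRel {α : Type} (R : Set (List α × List α)) : Prop :=
  ∃ L : Language (Option α × Option α), L.IsRegular ∧
    R = { p | ∃ z ∈ L, p = (z.filterMap Prod.fst, z.filterMap Prod.snd) }

/-- For a finite non-empty alphabet `α`, a regular language `X` and a
rational relation `R`, both `⟨R⟩X` and `⟨R⁻¹⟩X` are regular. -/
theorem dia_of_regular_isRegular {α : Type} [Fintype α] [Nonempty α]
    (X : Language α) (hX : X.IsRegular)
    (R : Set (List α × List α)) (hR : IsRationalRel R) :
    Language.IsRegular { u : List α | ∃ v ∈ X, (u, v) ∈ R } ∧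
    Language.IsRegular { u : List α | ∃ v ∈ X, (v, u) ∈ R } := by
  obtain ⟨L, ⟨σ₁, _, M, hM⟩, hRL⟩ := hR
  obtain ⟨σ₂, _, N, hN⟩ := hX
  constructor
  · have key := isRegular_filterMap_image (prodProjDFA M N Prod.snd) (Prod.fst)
    convert key using 2
    apply iff_of_eq; congr 1
    ext u
    simp only [Set.mem_setOf_eq, prodProjDFA_accepts, hRL, hM, hN]
    constructor
    · rintro ⟨v, hv, z, hz, heq⟩
      injection heq with h1 h2
      refine ⟨z, ⟨hz, ?_⟩, h1.symm⟩
      exact h2 ▸ hv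
    · rintro ⟨z, ⟨hz, hv⟩, rfl⟩
      exact ⟨z.filterMap Prod.snd, hv, z, hz, rfl⟩
  · have key := isRegular_filterMap_image (prodProjDFA M N Prod.fst) (Prod.snd)
    convert key using 2
    apply iff_of_eq; congr 1
    ext u
    simp only [Set.mem_setOf_eq, prodProjDFA_accepts, hRL, hM, hN]
    constructor
    · rintro ⟨v, hv, z, hz, heq⟩
      injection heq with h1 h2
      refine ⟨z, ⟨hz, ?_⟩, h2.symm⟩
      exact h1 ▸ hv
    · rintro ⟨z, ⟨hz, hv⟩, rfl⟩
      exact ⟨z.filterMap Prod.fst, hv, z, hz, rfl⟩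
end

section
/- Let Σ be a finite alphabet and M = (S, R, V) a rational Kripke model over Σ. Then for every formula φ of the basic tense logic K_t, the extension [[φ]]_M is a regular language over Σ. -/
/-- Formulas of the basic tense logic K_t over atomic propositions `Φ`. -/
inductive KtForm (Φ : Type) : Type where
  | atom : Φ → KtForm Φ
  | neg : KtForm Φ → KtForm Φ
  | disj : KtForm Φ → KtForm Φ → KtForm Φ
  | dia : KtForm Φ → KtForm Φ
  | diaInv : KtForm Φ → KtForm Φ

/-- The extension `[[φ]]` of a K_t formula in the Kripke model `(S, R, V)`. -/
def KtExt {Φ W : Type} (S : Set W) (R : Set (W × W)) (V : Φ → Set W) :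
    KtForm Φ → Set W
  | .atom p => V p
  | .neg φ => S \ KtExt S R V φ
  | .disj φ ψ => KtExt S R V φ ∪ KtExt S R V ψ
  | .dia φ => { s | s ∈ S ∧ ∃ t, t ∈ S ∧ (s, t) ∈ R ∧ t ∈ KtExt S R V φ }
  | .diaInv φ => { s | s ∈ S ∧ ∃ t, t ∈ S ∧ (t, s) ∈ R ∧ t ∈ KtExt S R V φ }

section Closure
variable {T U : Type}

theorem reg_inter {L₁ L₂ : Set (List T)} (h₁ : Language.IsRegular L₁)
    (h₂ : Language.IsRegular L₂) : Language.IsRegular ((L₁ ∩ L₂ : Set (List T))) := by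
  obtain ⟨σ₁, _, M₁, rfl⟩ := h₁
  obtain ⟨σ₂, _, M₂, rfl⟩ := h₂
  refine ⟨σ₁ × σ₂, inferInstance,
    ⟨fun q a => (M₁.step q.1 a, M₂.step q.2 a), (M₁.start, M₂.start),
      {q | q.1 ∈ M₁.accept ∧ q.2 ∈ M₂.accept}⟩, ?_⟩
  ext x
  have key : ∀ (x : List T) (q : σ₁ × σ₂),
      (DFA.mk (fun q a => (M₁.step q.1 a, M₂.step q.2 a)) (M₁.start, M₂.start)
        {q | q.1 ∈ M₁.accept ∧ q.2 ∈ M₂.accept}).evalFrom q x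
      = (M₁.evalFrom q.1 x, M₂.evalFrom q.2 x) := by
    intro x
    induction x with
    | nil => intro q; rfl
    | cons a x ih => intro q; exact ih _
  show _ ↔ x ∈ ((M₁.accepts ∩ M₂.accepts : Set (List T)))
  simp [DFA.mem_accepts, DFA.eval, key, Set.mem_inter_iff]
  exact Iff.rfl

theorem reg_union {L₁ L₂ : Set (List T)} (h₁ : Language.IsRegular L₁)
    (h₂ : Language.IsRegular L₂) : Language.IsRegular ((L₁ ∪ L₂ : Set (List T))) := by
  obtain ⟨σ₁, _, M₁, rfl⟩ := h₁
  obtain ⟨σ₂, _, M₂, rfl⟩ := h₂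
  refine ⟨σ₁ × σ₂, inferInstance,
    ⟨fun q a => (M₁.step q.1 a, M₂.step q.2 a), (M₁.start, M₂.start),
      {q | q.1 ∈ M₁.accept ∨ q.2 ∈ M₂.accept}⟩, ?_⟩
  ext x
  have key : ∀ (x : List T) (q : σ₁ × σ₂),
      (DFA.mk (fun q a => (M₁.step q.1 a, M₂.step q.2 a)) (M₁.start, M₂.start)
        {q | q.1 ∈ M₁.accept ∨ q.2 ∈ M₂.accept}).evalFrom q x
      = (M₁.evalFrom q.1 x, M₂.evalFrom q.2 x) := by
    intro x
    induction x with
    | nil => intro q; rfl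
    | cons a x ih => intro q; exact ih _
  show _ ↔ x ∈ ((M₁.accepts ∪ M₂.accepts : Set (List T)))
  simp [DFA.mem_accepts, DFA.eval, key, Set.mem_union]
  exact Iff.rfl

theorem reg_compl {L : Set (List T)} (h : Language.IsRegular L) :
    Language.IsRegular ((Lᶜ : Set (List T))) := by
  obtain ⟨σ, _, M, rfl⟩ := h
  exact ⟨σ, inferInstance, ⟨M.step, M.start, M.acceptᶜ⟩, rfl⟩

theorem reg_sdiff {L₁ L₂ : Set (List T)} (h₁ : Language.IsRegular L₁)
    (h₂ : Language.IsRegular L₂) : Language.IsRegular (L₁ \ L₂) := by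
  change Language.IsRegular ((L₁ ∩ L₂ᶜ : Set (List T)))
  exact reg_inter h₁ (reg_compl h₂)

/-- Inverse image of a regular language under `filterMap f` on letters. -/
theorem reg_preimage (f : T → Option U) {L : Set (List U)} (h : Language.IsRegular L) :
    Language.IsRegular {w : List T | w.filterMap f ∈ L} := by
  obtain ⟨σ, _, M, rfl⟩ := h
  refine ⟨σ, inferInstance,
    ⟨fun q a => (f a).elim q (M.step q), M.start, M.accept⟩, ?_⟩
  ext x
  have key : ∀ (x : List T) (q : σ),
      (DFA.mk (fun q a => (f a).elim q (M.step q)) M.start M.accept).evalFrom q x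
      = M.evalFrom q (x.filterMap f) := by
    intro x
    induction x with
    | nil => intro q; rfl
    | cons a x ih =>
      intro q
      cases hfa : f a <;> simp [DFA.evalFrom, List.filterMap_cons, hfa] <;>
        simpa [DFA.evalFrom] using ih _
  show _ ↔ x.filterMap f ∈ M.accepts
  simp [DFA.mem_accepts, DFA.eval, key]

/-- Forward image of a regular language under `filterMap f` on letters. -/
theorem reg_image (f : T → Option U) {L : Set (List T)}
    (h : Language.IsRegular L) :
    Language.IsRegular {u : List U | ∃ w ∈ L, w.filterMap f = u} := by
  classical
  obtain ⟨σ, _, M, rfl⟩ := h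
  set St : σ → List U → σ → Prop :=
    fun q u q' => ∃ w, M.evalFrom q w = q' ∧ w.filterMap f = u with hSt
  have stComp : ∀ {q u q' v q''}, St q u q' → St q' v q'' → St q (u ++ v) q'' := by
    rintro q u q' v q'' ⟨w₁, rfl, rfl⟩ ⟨w₂, rfl, rfl⟩
    exact ⟨w₁ ++ w₂, (M.evalFrom_of_append _ _ _), by simp⟩
  have stSplit : ∀ {q c u q'}, St q (c :: u) q' → ∃ q'', St q [c] q'' ∧ St q'' u q' := by
    rintro q c u q' ⟨w, rfl, hw⟩
    induction w generalizing q with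
    | nil => simp at hw
    | cons b w ih =>
      rw [List.filterMap_cons] at hw
      cases hfb : f b with
      | none =>
        rw [hfb] at hw
        obtain ⟨q'', h1, h2⟩ := ih (q := M.step q b) hw
        obtain ⟨w₁, hw₁, hw₁f⟩ := h1
        exact ⟨q'', ⟨b :: w₁, hw₁, by simp [List.filterMap_cons, hfb, hw₁f]⟩, h2⟩
      | some c' =>
        rw [hfb] at hw
        obtain ⟨rfl, rfl⟩ : c' = c ∧ w.filterMap f = u := by
          simpa using hw
        exact ⟨M.step q b, ⟨[b], rfl, by simp [List.filterMap_cons, hfb]⟩, ⟨w, rfl, rfl⟩⟩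
  let N : NFA U σ := ⟨fun q c => {q' | St q [c] q'}, {M.start}, {q | ∃ qa ∈ M.accept, St q [] qa}⟩
  have key : ∀ (u : List U) (Q : Set σ),
      (∃ q' ∈ N.accept, q' ∈ N.evalFrom Q u) ↔ ∃ q ∈ Q, ∃ qa ∈ M.accept, St q u qa := by
    intro u
    induction u with
    | nil =>
      intro Q
      simp only [NFA.evalFrom_nil]
      constructor
      · rintro ⟨q', ⟨qa, ha, hst⟩, hq'⟩; exact ⟨q', hq', qa, ha, hst⟩
      · rintro ⟨q, hq, qa, ha, hst⟩; exact ⟨q, ⟨qa, ha, hst⟩, hq⟩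
    | cons c u ih =>
      intro Q
      rw [show N.evalFrom Q (c :: u) = N.evalFrom (N.stepSet Q c) u from rfl, ih]
      constructor
      · rintro ⟨q'', hq'', qa, ha, hst⟩
        rw [NFA.mem_stepSet] at hq''
        obtain ⟨q, hq, h1⟩ := hq''
        exact ⟨q, hq, qa, ha, stComp h1 hst⟩
      · rintro ⟨q, hq, qa, ha, hst⟩
        obtain ⟨q'', h1, h2⟩ := stSplit hst
        exact ⟨q'', NFA.mem_stepSet.2 ⟨q, hq, h1⟩, qa, ha, h2⟩
  have hacc : N.accepts = {u : List U | ∃ w ∈ M.accepts, w.filterMap f = u} := by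
    ext u
    rw [NFA.mem_accepts, key u N.start]
    constructor
    · rintro ⟨q, hq, qa, ha, w, hw, rfl⟩
      rw [show N.start = {M.start} from rfl, Set.mem_singleton_iff] at hq
      subst hq
      exact ⟨w, by simpa [DFA.mem_accepts, DFA.eval, hw] using ha, rfl⟩
    · rintro ⟨w, hw, rfl⟩
      exact ⟨M.start, rfl, M.eval w, hw, w, rfl, rfl⟩
  refine ⟨Set σ, by infer_instance, N.toDFA, ?_⟩
  rw [N.toDFA_correct, hacc]
  exact rfl

end Closure

/-- In a rational Kripke model `M = (S, R ∩ (S × S), V)` over a finite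
alphabet, the extension of every K_t formula is a regular language. -/
theorem ktExt_isRegular_of_rationalModel {α Φ : Type} [Fintype α]
    (S : Set (List α)) (hS : Language.IsRegular S)
    (R : Set (List α × List α)) (hR : IsRationalRel R)
    (V : Φ → Set (List α)) (hV : ∀ p, Language.IsRegular (V p)) (hVS : ∀ p, V p ⊆ S)
    (φ : KtForm Φ) :
    Language.IsRegular (KtExt S (R ∩ S ×ˢ S) V φ) := by
  obtain ⟨LR, hLR, hReq⟩ := hR
  let LRs : Set (List (Option α × Option α)) := LR
  have hLRs : Language.IsRegular LRs := hLR
  induction φ with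
  | atom p => exact hV p
  | neg ψ ih => exact reg_sdiff hS ih
  | disj ψ χ ih₁ ih₂ => exact reg_union ih₁ ih₂
  | dia ψ ih =>
    have heq : KtExt S (R ∩ S ×ˢ S) V (.dia ψ) =
        (S ∩ {u : List α | ∃ z ∈ (LRs ∩
          {z | z.filterMap Prod.snd ∈
            ((S ∩ KtExt S (R ∩ S ×ˢ S) V ψ : Set (List α)))}),
          z.filterMap Prod.fst = u} : Set (List α)) := by
      ext s
      simp only [KtExt, Set.mem_setOf_eq, Set.mem_inter_iff]
      constructor
      · rintro ⟨hs, t, htS, ⟨hRst, _⟩, htE⟩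
        rw [hReq] at hRst
        obtain ⟨z, hz, hpz⟩ := hRst
        have h1 : s = z.filterMap Prod.fst := congrArg Prod.fst hpz
        have h2 : t = z.filterMap Prod.snd := congrArg Prod.snd hpz
        exact ⟨hs, z, ⟨hz, h2 ▸ ⟨htS, htE⟩⟩, h1.symm⟩
      · rintro ⟨hs, z, ⟨hzL, htS, htE⟩, rfl⟩
        refine ⟨hs, z.filterMap Prod.snd, htS, ⟨?_, hs, htS⟩, htE⟩
        rw [hReq]
        exact ⟨z, hzL, rfl⟩
    rw [heq]
    exact reg_inter hS (reg_image Prod.fst (reg_inter hLRs (reg_preimage Prod.snd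
      (reg_inter hS ih))))
  | diaInv ψ ih =>
    have heq : KtExt S (R ∩ S ×ˢ S) V (.diaInv ψ) =
        (S ∩ {u : List α | ∃ z ∈ (LRs ∩
          {z | z.filterMap Prod.fst ∈
            ((S ∩ KtExt S (R ∩ S ×ˢ S) V ψ : Set (List α)))}),
          z.filterMap Prod.snd = u} : Set (List α)) := by
      ext s
      simp only [KtExt, Set.mem_setOf_eq, Set.mem_inter_iff]
      constructor
      · rintro ⟨hs, t, htS, ⟨hRts, _⟩, htE⟩
        rw [hReq] at hRts
        obtain ⟨z, hz, hpz⟩ := hRts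
        have h1 : t = z.filterMap Prod.fst := congrArg Prod.fst hpz
        have h2 : s = z.filterMap Prod.snd := congrArg Prod.snd hpz
        exact ⟨hs, z, ⟨hz, h1 ▸ ⟨htS, htE⟩⟩, h2.symm⟩
      · rintro ⟨hs, z, ⟨hzL, htS, htE⟩, rfl⟩
        refine ⟨hs, z.filterMap Prod.fst, htS, ⟨?_, htS, hs⟩, htE⟩
        rw [hReq]
        exact ⟨z, hzL, rfl⟩
    rw [heq]
    exact reg_inter hS (reg_image Prod.snd (reg_inter hLRs (reg_preimage Prod.fst
      (reg_inter hS ih))))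
end

section
/- Let Σ be a finite alphabet and M = (S, R, V) a rational Kripke model over Σ in which additionally V(i) is a singleton subset of S for every nominal i. Then for every formula φ of the hybrid tense logic H_t(D), the extension [[φ]]_M is a regular language over Σ. -/
/-- Formulas of the hybrid tense logic H_t(D) over atomic propositions `Φ`
and nominals `Θ`. -/
inductive HtDForm (Φ Θ : Type) : Type where
  | atom : Φ → HtDForm Φ Θ
  | nom : Θ → HtDForm Φ Θ
  | neg : HtDForm Φ Θ → HtDForm Φ Θ
  | disj : HtDForm Φ Θ → HtDForm Φ Θ → HtDForm Φ Θ
  | dia : HtDForm Φ Θ → HtDForm Φ Θ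
  | diaInv : HtDForm Φ Θ → HtDForm Φ Θ
  | diaD : HtDForm Φ Θ → HtDForm Φ Θ

/-- The extension `[[φ]]` of an H_t(D) formula in a Kripke model `(S, R, V, N)`,
where `N` gives the valuation of nominals. -/
def HtDExt {Φ Θ W : Type} (S : Set W) (R : Set (W × W))
    (V : Φ → Set W) (N : Θ → Set W) : HtDForm Φ Θ → Set W
  | .atom p => V p
  | .nom i => N i
  | .neg φ => S \ HtDExt S R V N φ
  | .disj φ ψ => HtDExt S R V N φ ∪ HtDExt S R V N ψ
  | .dia φ => { s | s ∈ S ∧ ∃ t, t ∈ S ∧ (s, t) ∈ R ∧ t ∈ HtDExt S R V N φ }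
  | .diaInv φ => { s | s ∈ S ∧ ∃ t, t ∈ S ∧ (t, s) ∈ R ∧ t ∈ HtDExt S R V N φ }
  | .diaD φ => { s | s ∈ S ∧ ∃ t, t ∈ S ∧ t ≠ s ∧ t ∈ HtDExt S R V N φ }


open Set

namespace HtDAux

/-! ### Closure properties of regular languages -/

/-- Product DFA with an arbitrary acceptance set. -/
def prodDFA {α σ₁ σ₂ : Type} (M₁ : DFA α σ₁) (M₂ : DFA α σ₂) (acc : Set (σ₁ × σ₂)) :
    DFA α (σ₁ × σ₂) where
  step := fun s a => (M₁.step s.1 a, M₂.step s.2 a)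
  start := (M₁.start, M₂.start)
  accept := acc

theorem prodDFA_evalFrom {α σ₁ σ₂ : Type} (M₁ : DFA α σ₁) (M₂ : DFA α σ₂)
    (acc : Set (σ₁ × σ₂)) : ∀ (x : List α) (s : σ₁ × σ₂),
    (prodDFA M₁ M₂ acc).evalFrom s x = (M₁.evalFrom s.1 x, M₂.evalFrom s.2 x) := by
  intro x
  induction x with
  | nil => intro s; rfl
  | cons a x ih =>
    intro s
    simp only [DFA.evalFrom, List.foldl_cons] at *
    exact ih _

theorem isRegular_inter {α : Type} {L₁ L₂ : Set (List α)}
    (h₁ : Language.IsRegular L₁) (h₂ : Language.IsRegular L₂) :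
    Language.IsRegular ((L₁ ∩ L₂ : Set (List α))) := by
  obtain ⟨σ₁, _, M₁, rfl⟩ := h₁
  obtain ⟨σ₂, _, M₂, rfl⟩ := h₂
  refine ⟨σ₁ × σ₂, inferInstance, prodDFA M₁ M₂ {s | s.1 ∈ M₁.accept ∧ s.2 ∈ M₂.accept}, ?_⟩
  ext x
  simp only [DFA.mem_accepts, DFA.eval]
  rw [prodDFA_evalFrom]
  rfl

theorem isRegular_union {α : Type} {L₁ L₂ : Set (List α)}
    (h₁ : Language.IsRegular L₁) (h₂ : Language.IsRegular L₂) :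
    Language.IsRegular ((L₁ ∪ L₂ : Set (List α))) := by
  obtain ⟨σ₁, _, M₁, rfl⟩ := h₁
  obtain ⟨σ₂, _, M₂, rfl⟩ := h₂
  refine ⟨σ₁ × σ₂, inferInstance, prodDFA M₁ M₂ {s | s.1 ∈ M₁.accept ∨ s.2 ∈ M₂.accept}, ?_⟩
  ext x
  simp only [DFA.mem_accepts, DFA.eval]
  rw [prodDFA_evalFrom]
  rfl

theorem isRegular_compl {α : Type} {L : Set (List α)} (h : Language.IsRegular L) :
    Language.IsRegular ((Lᶜ : Set (List α))) := by
  obtain ⟨σ, _, M, rfl⟩ := h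
  exact ⟨σ, inferInstance, ⟨M.step, M.start, M.acceptᶜ⟩, rfl⟩

theorem isRegular_diff {α : Type} {L₁ L₂ : Set (List α)}
    (h₁ : Language.IsRegular L₁) (h₂ : Language.IsRegular L₂) :
    Language.IsRegular ((L₁ \ L₂ : Set (List α))) :=
  isRegular_inter h₁ (isRegular_compl h₂)

theorem isRegular_empty {α : Type} : Language.IsRegular (∅ : Set (List α)) := by
  refine ⟨Unit, inferInstance, ⟨fun _ _ => (), (), ∅⟩, ?_⟩
  ext x
  simp only [DFA.mem_accepts]
  exact iff_of_false (fun h => h) (fun h => h)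

end HtDAux

namespace HtDAux

theorem isRegular_of_nfa {α σ : Type} [Fintype σ] (M : NFA α σ) : M.accepts.IsRegular :=
  ⟨Set σ, inferInstance, M.toDFA, M.toDFA_correct⟩

/-! ### Singleton languages are regular -/

def singNFA {α : Type} (w : List α) : NFA α (Fin (w.length + 1)) where
  step := fun i a => {j | (j : ℕ) = (i : ℕ) + 1 ∧ w[(i : ℕ)]? = some a}
  start := {j | (j : ℕ) = 0}
  accept := {Fin.last w.length}

theorem prefix_append_singleton_iff {α : Type} {x w : List α} {a : α} :
    x ++ [a] <+: w ↔ x <+: w ∧ w[x.length]? = some a := by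
  constructor
  · rintro ⟨t, ht⟩
    rw [List.append_assoc] at ht
    refine ⟨⟨[a] ++ t, ht⟩, ?_⟩
    rw [← ht, List.getElem?_append_right le_rfl]
    simp
  · rintro ⟨⟨t, rfl⟩, hget⟩
    rw [List.getElem?_append_right le_rfl] at hget
    simp at hget
    cases t with
    | nil => simp at hget
    | cons b t =>
      simp at hget
      subst hget
      exact ⟨t, by simp⟩

theorem singNFA_eval {α : Type} (w : List α) (x : List α) :
    (singNFA w).eval x = {j : Fin (w.length + 1) | (j : ℕ) = x.length ∧ x <+: w} := by
  induction x using List.reverseRecOn with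
  | nil =>
    ext j
    simp [singNFA, NFA.eval, List.nil_prefix]
  | append_singleton x a ih =>
    rw [NFA.eval_append_singleton, ih]
    ext j
    simp only [NFA.mem_stepSet, Set.mem_setOf_eq, List.length_append, List.length_singleton]
    constructor
    · rintro ⟨i, ⟨hi, hx⟩, hj, hget⟩
      rw [hi] at hj hget
      exact ⟨hj, prefix_append_singleton_iff.2 ⟨hx, hget⟩⟩
    · rintro ⟨hj, hpre⟩
      obtain ⟨hx, hget⟩ := prefix_append_singleton_iff.1 hpre
      have hlt : x.length < w.length + 1 := by
        have := hpre.length_le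
        simp at this
        omega
      exact ⟨⟨x.length, hlt⟩, ⟨rfl, hx⟩, hj, hget⟩

theorem isRegular_singleton {α : Type} (w : List α) :
    Language.IsRegular ({w} : Set (List α)) := by
  have h : (singNFA w).accepts = ({w} : Set (List α)) := by
    ext x
    simp only [NFA.mem_accepts]
    constructor
    · rintro ⟨S, hS, hmem⟩
      have : S = Fin.last w.length := hS
      subst this
      rw [show (singNFA w).evalFrom (singNFA w).start x = (singNFA w).eval x from rfl,
        singNFA_eval] at hmem
      obtain ⟨hlen, hpre⟩ := hmem
      simp only [Fin.val_last] at hlen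
      exact hpre.eq_of_length hlen.symm
    · rintro rfl
      refine ⟨Fin.last x.length, rfl, ?_⟩
      rw [show (singNFA x).evalFrom (singNFA x).start x = (singNFA x).eval x from rfl,
        singNFA_eval]
      exact ⟨by simp, List.prefix_refl x⟩
  exact h ▸ isRegular_of_nfa (singNFA w)

end HtDAux

namespace HtDAux

/-! ### Rational transductions preserve regularity -/

theorem filterMap_eq_append_split {β γ : Type} (f : β → Option γ) :
    ∀ (w : List β) (x y : List γ), w.filterMap f = x ++ y →
      ∃ w₁ w₂, w = w₁ ++ w₂ ∧ w₁.filterMap f = x ∧ w₂.filterMap f = y := by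
  intro w
  induction w with
  | nil =>
    intro x y h
    simp only [List.filterMap_nil] at h
    obtain ⟨rfl, rfl⟩ := List.append_eq_nil_iff.mp h.symm
    exact ⟨[], [], rfl, rfl, rfl⟩
  | cons b w ih =>
    intro x y h
    rcases hb : f b with _ | c
    · rw [List.filterMap_cons_none hb] at h
      obtain ⟨w₁, w₂, rfl, h₁, h₂⟩ := ih x y h
      exact ⟨b :: w₁, w₂, rfl, by rw [List.filterMap_cons_none hb, h₁], h₂⟩
    · rw [List.filterMap_cons_some hb] at h
      cases x with
      | nil =>
        refine ⟨[], b :: w, rfl, rfl, ?_⟩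
        rw [List.filterMap_cons_some hb]
        simpa using h
      | cons d x =>
        simp only [List.cons_append, List.cons.injEq] at h
        obtain ⟨rfl, h'⟩ := h
        obtain ⟨w₁, w₂, rfl, h₁, h₂⟩ := ih x y h'
        exact ⟨b :: w₁, w₂, rfl, by rw [List.filterMap_cons_some hb, h₁], h₂⟩

/-- The asynchronous product NFA realising a rational transduction applied to a
regular language. -/
def transNFA {α β σA σB : Type} (A : DFA β σA) (B : DFA α σB) (f g : β → Option α) :
    NFA α (σA × σB) where
  step := fun s a => {t | ∃ w : List β, w.filterMap f = [a] ∧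
    A.evalFrom s.1 w = t.1 ∧ B.evalFrom s.2 (w.filterMap g) = t.2}
  start := {t | ∃ w : List β, w.filterMap f = [] ∧
    A.evalFrom A.start w = t.1 ∧ B.evalFrom B.start (w.filterMap g) = t.2}
  accept := {t | t.1 ∈ A.accept ∧ t.2 ∈ B.accept}

theorem transNFA_eval {α β σA σB : Type} (A : DFA β σA) (B : DFA α σB) (f g : β → Option α)
    (x : List α) (t : σA × σB) :
    t ∈ (transNFA A B f g).eval x ↔ ∃ w : List β, w.filterMap f = x ∧
      A.evalFrom A.start w = t.1 ∧ B.evalFrom B.start (w.filterMap g) = t.2 := by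
  induction x using List.reverseRecOn generalizing t with
  | nil => exact Iff.rfl
  | append_singleton x a ih =>
    rw [NFA.eval_append_singleton, NFA.mem_stepSet]
    constructor
    · rintro ⟨s, hs, w₂, hw₂, hA₂, hB₂⟩
      obtain ⟨w₁, hw₁, hA₁, hB₁⟩ := (ih s).1 hs
      refine ⟨w₁ ++ w₂, ?_, ?_, ?_⟩
      · rw [List.filterMap_append, hw₁, hw₂]
      · rw [DFA.evalFrom_of_append, hA₁, hA₂]
      · rw [List.filterMap_append, DFA.evalFrom_of_append, hB₁, hB₂]
    · rintro ⟨w, hw, hA, hB⟩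
      obtain ⟨w₁, w₂, rfl, hw₁, hw₂⟩ := filterMap_eq_append_split f w x [a] hw
      refine ⟨(A.evalFrom A.start w₁, B.evalFrom B.start (w₁.filterMap g)), (ih _).2
        ⟨w₁, hw₁, rfl, rfl⟩, w₂, hw₂, ?_, ?_⟩
      · rw [← hA, DFA.evalFrom_of_append]
      · rw [← hB, List.filterMap_append, DFA.evalFrom_of_append]

theorem isRegular_transduction {α β : Type} (f g : β → Option α) {L : Set (List β)}
    (hL : Language.IsRegular L) {T : Set (List α)} (hT : Language.IsRegular T) :
    Language.IsRegular {x : List α | ∃ z ∈ L, z.filterMap f = x ∧ z.filterMap g ∈ T} := by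
  obtain ⟨σA, _, A, rfl⟩ := hL
  obtain ⟨σB, _, B, rfl⟩ := hT
  have h : (transNFA A B f g).accepts =
      {x : List α | ∃ z ∈ A.accepts, z.filterMap f = x ∧ z.filterMap g ∈ B.accepts} := by
    ext x
    simp only [NFA.mem_accepts, Set.mem_setOf_eq]
    constructor
    · rintro ⟨t, ⟨htA, htB⟩, ht⟩
      obtain ⟨w, hw, hA, hB⟩ := (transNFA_eval A B f g x t).1 ht
      exact ⟨w, by rwa [DFA.mem_accepts, DFA.eval, hA], hw,
        by rwa [DFA.mem_accepts, DFA.eval, hB]⟩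
    · rintro ⟨z, hz, hzx, hzT⟩
      exact ⟨(A.evalFrom A.start z, B.evalFrom B.start (z.filterMap g)), ⟨hz, hzT⟩,
        (transNFA_eval A B f g x _).2 ⟨z, hzx, rfl, rfl⟩⟩
  exact h ▸ isRegular_of_nfa _

end HtDAux

theorem htDExt_subset {Φ Θ W : Type} (S : Set W) (R : Set (W × W))
    (V : Φ → Set W) (N : Θ → Set W) (hVS : ∀ p, V p ⊆ S) (hNS : ∀ i, N i ⊆ S) :
    ∀ φ, HtDExt S R V N φ ⊆ S := by
  intro φ
  induction φ with
  | atom p => exact hVS p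
  | nom i => exact hNS i
  | neg φ ih => exact Set.diff_subset
  | disj φ ψ ih₁ ih₂ => exact Set.union_subset ih₁ ih₂
  | dia φ ih => exact fun s hs => hs.1
  | diaInv φ ih => exact fun s hs => hs.1
  | diaD φ ih => exact fun s hs => hs.1

/-- In a rational Kripke model over a finite alphabet in which every
nominal is evaluated in a singleton subset of `S`, the extension of every H_t(D)
formula is a regular language. -/
theorem htDExt_isRegular_of_rationalModel {α Φ Θ : Type} [Fintype α]
    (S : Set (List α)) (hS : Language.IsRegular S)
    (R : Set (List α × List α)) (hR : IsRationalRel R)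
    (V : Φ → Set (List α)) (hV : ∀ p, Language.IsRegular (V p)) (hVS : ∀ p, V p ⊆ S)
    (N : Θ → Set (List α)) (hN : ∀ i, ∃ w, N i = {w}) (hNS : ∀ i, N i ⊆ S)
    (φ : HtDForm Φ Θ) :
    Language.IsRegular (HtDExt S (R ∩ S ×ˢ S) V N φ) := by
  obtain ⟨L, hLreg, hRL⟩ := hR
  have hsub := htDExt_subset S (R ∩ S ×ˢ S) V N hVS hNS
  induction φ with
  | atom p => exact hV p
  | nom i =>
    obtain ⟨w, hw⟩ := hN i
    rw [show HtDExt S (R ∩ S ×ˢ S) V N (.nom i) = N i from rfl, hw]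
    exact HtDAux.isRegular_singleton w
  | neg φ ih =>
    exact HtDAux.isRegular_diff hS ih
  | disj φ ψ ih₁ ih₂ =>
    exact HtDAux.isRegular_union ih₁ ih₂
  | dia φ ih =>
    have key : HtDExt S (R ∩ S ×ˢ S) V N (.dia φ) =
        (S ∩ {x : List α | ∃ z ∈ L, z.filterMap Prod.fst = x ∧
          z.filterMap Prod.snd ∈ (S ∩ HtDExt S (R ∩ S ×ˢ S) V N φ)} : Set (List α)) := by
      ext s
      simp only [HtDExt, Set.mem_setOf_eq, Set.mem_inter_iff]
      constructor
      · rintro ⟨hsS, t, htS, ⟨hRst, -⟩, htφ⟩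
        rw [hRL] at hRst
        obtain ⟨z, hz, hst⟩ := hRst
        obtain ⟨h1, h2⟩ := Prod.mk.injEq .. ▸ hst
        exact ⟨hsS, z, hz, h1.symm, h2 ▸ ⟨htS, htφ⟩⟩
      · rintro ⟨hsS, z, hz, hx, htS, htφ⟩
        refine ⟨hsS, z.filterMap Prod.snd, htS, ⟨?_, hx ▸ hsS, htS⟩, htφ⟩
        rw [hRL]
        exact ⟨z, hz, by rw [hx]⟩
    rw [key]
    exact HtDAux.isRegular_inter hS
      (HtDAux.isRegular_transduction _ _ hLreg (HtDAux.isRegular_inter hS ih))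
  | diaInv φ ih =>
    have key : HtDExt S (R ∩ S ×ˢ S) V N (.diaInv φ) =
        (S ∩ {x : List α | ∃ z ∈ L, z.filterMap Prod.snd = x ∧
          z.filterMap Prod.fst ∈ (S ∩ HtDExt S (R ∩ S ×ˢ S) V N φ)} : Set (List α)) := by
      ext s
      simp only [HtDExt, Set.mem_setOf_eq, Set.mem_inter_iff]
      constructor
      · rintro ⟨hsS, t, htS, ⟨hRst, -⟩, htφ⟩
        rw [hRL] at hRst
        obtain ⟨z, hz, hst⟩ := hRst
        obtain ⟨h1, h2⟩ := Prod.mk.injEq .. ▸ hst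
        exact ⟨hsS, z, hz, h2.symm, h1 ▸ ⟨htS, htφ⟩⟩
      · rintro ⟨hsS, z, hz, hx, htS, htφ⟩
        refine ⟨hsS, z.filterMap Prod.fst, htS, ⟨?_, htS, hx ▸ hsS⟩, htφ⟩
        rw [hRL]
        exact ⟨z, hz, by rw [hx]⟩
    rw [key]
    exact HtDAux.isRegular_inter hS
      (HtDAux.isRegular_transduction _ _ hLreg (HtDAux.isRegular_inter hS ih))
  | diaD φ ih =>
    have hφS : HtDExt S (R ∩ S ×ˢ S) V N φ ⊆ S := hsub φ
    by_cases hne : (HtDExt S (R ∩ S ×ˢ S) V N φ).Nonempty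
    · obtain ⟨w, hw⟩ := hne
      by_cases h2 : ∃ t ∈ HtDExt S (R ∩ S ×ˢ S) V N φ, t ≠ w
      · obtain ⟨t, ht, htw⟩ := h2
        have key : HtDExt S (R ∩ S ×ˢ S) V N (.diaD φ) = S := by
          ext s
          simp only [HtDExt, Set.mem_setOf_eq]
          refine ⟨fun h => h.1, fun hsS => ⟨hsS, ?_⟩⟩
          rcases eq_or_ne t s with rfl | hts
          · exact ⟨w, hφS hw, fun h => htw h.symm, hw⟩
          · exact ⟨t, hφS ht, hts, ht⟩
        rw [key]; exact hS
      · push_neg at h2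
        have key : HtDExt S (R ∩ S ×ˢ S) V N (.diaD φ) =
            (S \ HtDExt S (R ∩ S ×ˢ S) V N φ : Set (List α)) := by
          ext s
          simp only [HtDExt, Set.mem_setOf_eq, Set.mem_diff]
          constructor
          · rintro ⟨hsS, t, htS, hts, htφ⟩
            refine ⟨hsS, fun hsφ => hts ?_⟩
            rw [h2 t htφ, h2 s hsφ]
          · rintro ⟨hsS, hsφ⟩
            exact ⟨hsS, w, hφS hw, fun h => hsφ (h ▸ hw), hw⟩
        rw [key]; exact HtDAux.isRegular_diff hS ih
    · have key : HtDExt S (R ∩ S ×ˢ S) V N (.diaD φ) = (∅ : Set (List α)) := by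
        ext s
        simp only [HtDExt, Set.mem_setOf_eq, Set.mem_empty_iff_false, iff_false]
        rintro ⟨-, t, -, -, htφ⟩
        exact hne ⟨t, htφ⟩
      rw [key]; exact HtDAux.isRegular_empty
end
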